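/- (Angeli et al., Proposition 5.4, as restated in the paper.) Consider the closed chemical reaction network system dA/dt = S·f(A) with kinetics compatible with the network structure, and let A : [0,∞) → ℝ^N_{≥0} be a bounded solution with strictly positive initial conditions (A_i(0) > 0 for all i). If the ω-limit set of A (the set of limits of A(t_n) over sequences t_n → ∞) contains a point w whose zero set Z = {i : w_i = 0} is nonempty, then Z is a siphon. -/

import Mathlib

open Matrix Filter

/-- Angeli et al., Proposition 5.4: for the closed system
`dA/dt = S·f(A)` with kinetics compatible with the network structure, a bounded solution
with strictly positive initial conditions whose ω-limit set contains a point `w` with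
nonempty zero set `Z = {i : w i = 0}` has `Z` a siphon. -/
theorem omega_limit_zero_set_is_siphon
    (N R : ℕ) (Y Y' : Matrix (Fin N) (Fin R) ℕ)
    (S : Matrix (Fin N) (Fin R) ℝ)
    (hS : ∀ i j, S i j = (Y' i j : ℝ) - (Y i j : ℝ))
    (f : (Fin N → ℝ) → Fin R → ℝ) (hf_cont : Continuous f)
    (hf_nonneg : ∀ x : Fin N → ℝ, (∀ i, 0 ≤ x i) → ∀ j, 0 ≤ f x j)
    (hf_compat_zero : ∀ (j : Fin R) (x : Fin N → ℝ), (∀ i, 0 ≤ x i) →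
      (∃ k, 0 < Y k j ∧ x k = 0) → f x j = 0)
    (hf_compat_pos : ∀ (j : Fin R) (x : Fin N → ℝ), (∀ k, 0 < Y k j → 0 < x k) →
      0 < f x j)
    (A : ℝ → Fin N → ℝ)
    (hA_nonneg : ∀ t ≥ (0:ℝ), ∀ i, 0 ≤ A t i)
    (hODE : ∀ t ≥ (0:ℝ), HasDerivWithinAt A (S.mulVec (f (A t))) (Set.Ici 0) t)
    (hA_bounded : ∃ M : ℝ, ∀ t ≥ (0:ℝ), ‖A t‖ ≤ M)
    (hA_pos_init : ∀ i, 0 < A 0 i)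
    (w : Fin N → ℝ) (ts : ℕ → ℝ)
    (hts_nonneg : ∀ n, 0 ≤ ts n)
    (hts : Tendsto ts atTop atTop)
    (hw : Tendsto (fun n => A (ts n)) atTop (nhds w))
    (hZ_ne : {i : Fin N | w i = 0}.Nonempty) :
    ∀ (j : Fin R), ∀ i, w i = 0 → 0 < Y' i j → ∃ k, w k = 0 ∧ 0 < Y k j := by
  intro j i hwi hY'
  by_contra hcon
  push_neg at hcon
  -- `w` is nonnegative
  have hw_nonneg : ∀ k, 0 ≤ w k := fun k =>
    ge_of_tendsto' (tendsto_pi_nhds.1 hw k) (fun n => hA_nonneg (ts n) (hts_nonneg n) k)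
  -- all reactants of `j` are positive at `w`
  have hreact : ∀ k, 0 < Y k j → 0 < w k := by
    intro k hk
    exact (hw_nonneg k).lt_of_ne (fun h => absurd hk (hcon k h.symm).not_gt)
  have hfwj : 0 < f w j := hf_compat_pos j w hreact
  have hYij0 : Y i j = 0 := by
    by_contra h
    exact absurd hwi (hreact i (Nat.pos_of_ne_zero h)).ne'
  have hfw_nonneg := hf_nonneg w hw_nonneg
  -- each term of the vector field's i-th component at w is nonnegative
  have hterm : ∀ j' : Fin R, 0 ≤ S i j' * f w j' := by
    intro j'
    rcases le_or_gt 0 (S i j') with h | h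
    · exact mul_nonneg h (hfw_nonneg j')
    · have hY : 0 < Y i j' := by
        rcases Nat.eq_zero_or_pos (Y i j') with h0 | hp
        · exfalso
          rw [hS i j', h0] at h
          simp at h
          exact absurd h (Nat.cast_nonneg _).not_gt
        · exact hp
      have : f w j' = 0 := hf_compat_zero j' w hw_nonneg ⟨i, hY, hwi⟩
      simp [this]
  have hSij : 0 < S i j := by
    have hcast : (0:ℝ) < (Y' i j : ℝ) := by exact_mod_cast hY'
    rw [hS i j, hYij0]
    simpa using hcast
  -- the vector field's i-th component is positive at w
  have hc0 : 0 < S.mulVec (f w) i := by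
    have hrw : S.mulVec (f w) i = ∑ j', S i j' * f w j' := by
      simp [Matrix.mulVec, dotProduct]
    rw [hrw]
    exact Finset.sum_pos' (fun j' _ => hterm j')
      ⟨j, Finset.mem_univ j, mul_pos hSij hfwj⟩
  set c : ℝ := S.mulVec (f w) i / 2 with hc_def
  have hc_pos : 0 < c := by positivity
  -- continuity of the vector field
  have hmv : Continuous fun v : Fin R → ℝ => S.mulVec v := by
    exact S.mulVecLin.continuous_of_finiteDimensional
  have hgc : Continuous fun x : Fin N → ℝ => S.mulVec (f x) := hmv.comp hf_cont
  have hgi : Continuous fun x : Fin N → ℝ => S.mulVec (f x) i :=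
    (continuous_apply i).comp hgc
  -- a ball around w where the i-th component exceeds c
  obtain ⟨δ, hδpos, hδ⟩ : ∃ δ > 0, ∀ x, dist x w < δ → c < S.mulVec (f x) i := by
    have hmem : {x : Fin N → ℝ | c < S.mulVec (f x) i} ∈ nhds w :=
      hgi.continuousAt.preimage_mem_nhds (Ioi_mem_nhds (by
        simp only [hc_def]; linarith))
    obtain ⟨δ, hδpos, hball⟩ := Metric.mem_nhds_iff.1 hmem
    exact ⟨δ, hδpos, fun x hx => hball hx⟩
  -- a global speed bound on the trajectory
  obtain ⟨M, hM⟩ := hA_bounded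
  obtain ⟨K, hK⟩ := (isCompact_closedBall (0 : Fin N → ℝ) M).exists_bound_of_continuousOn
    hgc.continuousOn
  set K' : ℝ := max K 1 with hK'_def
  have hK'_pos : 0 < K' := lt_of_lt_of_le one_pos (le_max_right _ _)
  have hspeed : ∀ t ≥ (0:ℝ), ‖S.mulVec (f (A t))‖ ≤ K' := by
    intro t ht
    exact le_trans (hK (A t) (Metric.mem_closedBall.2 (by
      simpa [dist_eq_norm] using hM t ht))) (le_max_left _ _)
  set s : ℝ := δ / (2 * K') with hs_def
  have hs_pos : 0 < s := by positivity
  have hK's : K' * s = δ / 2 := by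
    field_simp [hs_def]
    rw [hs_def]; field_simp
  -- choose a time along the sequence
  have hev : ∀ᶠ n in atTop, s ≤ ts n ∧ dist (A (ts n)) w < δ / 2 ∧ A (ts n) i < c * s := by
    have h1 : ∀ᶠ n in atTop, s ≤ ts n := hts.eventually_ge_atTop s
    have h2 : ∀ᶠ n in atTop, dist (A (ts n)) w < δ / 2 := by
      have := hw (Metric.ball_mem_nhds w (by positivity : (0:ℝ) < δ / 2))
      simpa [Metric.mem_ball] using this
    have h3 : ∀ᶠ n in atTop, A (ts n) i < c * s := by
      have htend : Tendsto (fun n => A (ts n) i) atTop (nhds (w i)) := tendsto_pi_nhds.1 hw i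
      exact htend.eventually (gt_mem_nhds (by rw [hwi]; positivity))
    exact h1.and (h2.and h3)
  obtain ⟨n, hns, hndist, hnsmall⟩ := hev.exists
  set t : ℝ := ts n with ht_def
  have ht0 : (0:ℝ) ≤ t := hts_nonneg n
  have hts0 : (0:ℝ) ≤ t - s := by linarith
  set I : Set ℝ := Set.Icc (t - s) t with hI_def
  have hIsub : I ⊆ Set.Ici (0:ℝ) := fun τ hτ => le_trans hts0 hτ.1
  have hderivI : ∀ τ ∈ I, HasDerivWithinAt A (S.mulVec (f (A τ))) I τ :=
    fun τ hτ => (hODE τ (hIsub hτ)).mono hIsub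
  have hboundI : ∀ τ ∈ I, ‖S.mulVec (f (A τ))‖ ≤ K' :=
    fun τ hτ => hspeed τ (hIsub hτ)
  -- the trajectory stays in the δ-ball around w on I
  have hball : ∀ τ ∈ I, dist (A τ) w < δ := by
    intro τ hτ
    have hlip := (convex_Icc (t - s) t).norm_image_sub_le_of_norm_hasDerivWithin_le
      hderivI hboundI hτ (Set.right_mem_Icc.2 (by linarith))
    have h1 : ‖A t - A τ‖ ≤ K' * ‖t - τ‖ := hlip
    have h2 : ‖t - τ‖ ≤ s := by
      rw [Real.norm_eq_abs, abs_of_nonneg (by linarith [hτ.2])]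
      linarith [hτ.1]
    have h3 : dist (A τ) (A t) ≤ δ / 2 := by
      rw [dist_eq_norm, ← norm_neg]
      simp only [neg_sub]
      calc ‖A t - A τ‖ ≤ K' * ‖t - τ‖ := h1
        _ ≤ K' * s := by nlinarith [hK'_pos]
        _ = δ / 2 := hK's
    calc dist (A τ) w ≤ dist (A τ) (A t) + dist (A t) w := dist_triangle _ _ _
      _ < δ / 2 + δ / 2 := by have := hndist; linarith
      _ = δ := by ring
  have hgpos : ∀ τ ∈ I, c < S.mulVec (f (A τ)) i :=
    fun τ hτ => hδ (A τ) (hball τ hτ)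
  -- strict monotonicity of A τ i - c * τ on I
  have hcontA : ContinuousOn A I := fun τ hτ => (hderivI τ hτ).continuousWithinAt
  have hconth : ContinuousOn (fun τ => A τ i - c * τ) I := by
    apply ContinuousOn.sub
    · exact (continuous_apply i).comp_continuousOn hcontA
    · exact (continuous_const.mul continuous_id).continuousOn
  have hintI : interior I = Set.Ioo (t - s) t := interior_Icc
  have hderivh : ∀ τ ∈ interior I,
      HasDerivWithinAt (fun τ => A τ i - c * τ) (S.mulVec (f (A τ)) i - c) (interior I) τ := by
    intro τ hτ
    rw [hintI] at hτ ⊢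
    have hmem : τ ∈ I := Set.Ioo_subset_Icc_self hτ
    have hcomp : HasDerivWithinAt (fun τ => A τ i) (S.mulVec (f (A τ)) i)
        (Set.Ioo (t - s) t) τ :=
      hasDerivWithinAt_pi.1 ((hderivI τ hmem).mono Set.Ioo_subset_Icc_self) i
    have hlin : HasDerivWithinAt (fun τ : ℝ => c * τ) c (Set.Ioo (t - s) t) τ := by
      simpa using (hasDerivWithinAt_id τ (Set.Ioo (t - s) t)).const_mul c
    exact hcomp.sub hlin
  have hpos : ∀ τ ∈ interior I, 0 < S.mulVec (f (A τ)) i - c := by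
    intro τ hτ
    rw [hintI] at hτ
    have := hgpos τ (Set.Ioo_subset_Icc_self hτ)
    linarith
  have hmono : StrictMonoOn (fun τ => A τ i - c * τ) I :=
    strictMonoOn_of_hasDerivWithinAt_pos (convex_Icc _ _) hconth hderivh hpos
  have hlt := hmono (Set.left_mem_Icc.2 (by linarith)) (Set.right_mem_Icc.2 (by linarith))
    (by linarith)
  -- contradiction: A t i ≥ c * s but A t i < c * s
  have hAnn : 0 ≤ A (t - s) i := hA_nonneg (t - s) hts0 i
  simp only at hlt
  nlinarith [hnsmall]
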